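/- Let P ⊂ ℂ be the HN polygon (a convex set containing the path from 0 to z(E) on its left boundary) and suppose A ⊆ E with HN^Z(A) ⊆ HN^Z(E). Define the mass m^Z(F) as the Euclidean length of the left boundary of HN^Z(F) from 0 to Z(F). Then m^Z(A) − Re Z(A) ≤ m^Z(E) − Re Z(E). -/

import Mathlib

namespace Stmt12Aux

open Real

/-- Half-plane predicate: `0 < Im d`, or `Im d = 0` and `Re d < 0`. -/
def HP (d : ℂ) : Prop := 0 < d.im ∨ (d.im = 0 ∧ d.re < 0)

lemma HP.ne_zero {d : ℂ} (h : HP d) : d ≠ 0 := by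
  rintro rfl
  rcases h with h | h
  · simp at h
  · simp at h

lemma HP.abs_pos {d : ℂ} (h : HP d) : 0 < ‖d‖ :=
  norm_pos_iff.2 h.ne_zero

lemma HP.arg_pos {d : ℂ} (h : HP d) : 0 < d.arg := by
  rcases h with h | h
  · rcases lt_or_eq_of_le (Complex.arg_nonneg_iff.2 h.le) with h' | h'
    · exact h'
    · exfalso
      have := Complex.arg_eq_zero_iff.1 h'.symm
      linarith [this.2]
  · rw [Complex.arg_eq_pi_iff.2 ⟨h.2, h.1⟩]
    exact Real.pi_pos

/-- Rotated imaginary part `Im (z e^{-iφ})`. -/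
noncomputable def R (z : ℂ) (φ : ℝ) : ℝ := z.im * Real.cos φ - z.re * Real.sin φ

lemma R_sub (z w : ℂ) (φ : ℝ) : R (z - w) φ = R z φ - R w φ := by
  simp only [R, Complex.sub_im, Complex.sub_re]; ring

lemma R_rot (d : ℂ) (φ : ℝ) :
    R d φ = ‖d‖ * Real.sin (d.arg - φ) := by
  have h1 := Complex.norm_mul_sin_arg d
  have h2 := Complex.norm_mul_cos_arg d
  simp only [R, Real.sin_sub]
  linear_combination Real.sin φ * h2 - Real.cos φ * h1

lemma R_self_arg (d : ℂ) : R d d.arg = 0 := by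
  rw [R_rot]; simp

lemma le_of_sin_nonneg {θ φ : ℝ} (hθ2 : θ ≤ π) (hφ1 : 0 ≤ φ)
    (h : 0 ≤ Real.sin (θ - φ)) (hbig : -π < θ - φ) : φ ≤ θ := by
  by_contra hc
  push_neg at hc
  have := Real.sin_neg_of_neg_of_neg_pi_lt (by linarith) hbig
  linarith

lemma lt_of_sin_neg {θ φ : ℝ} (hθ2 : θ ≤ π) (hφ1 : 0 ≤ φ)
    (h : Real.sin (θ - φ) < 0) : θ < φ := by
  by_contra hc
  push_neg at hc
  have := Real.sin_nonneg_of_nonneg_of_le_pi (x := θ - φ) (by linarith) (by linarith)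
  linarith

lemma interp {w : ℂ} {α β φ : ℝ} (hβ0 : 0 ≤ β) (hβφ : β ≤ φ) (hφα : φ ≤ α) (hαπ : α ≤ π)
    (hlt : α - β < π) (hA : R w α ≤ 0) (hB : R w β ≤ 0) : R w φ ≤ 0 := by
  rcases eq_or_lt_of_le (hβφ.trans hφα) with h | h
  · have : φ = β := le_antisymm (h ▸ hφα) hβφ
    rw [this]; exact hB
  · have hs1 : 0 < Real.sin (α - β) := Real.sin_pos_of_pos_of_lt_pi (by linarith) hlt
    have hs2 : 0 ≤ Real.sin (α - φ) := Real.sin_nonneg_of_nonneg_of_le_pi (by linarith) (by linarith)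
    have hs3 : 0 ≤ Real.sin (φ - β) := Real.sin_nonneg_of_nonneg_of_le_pi (by linarith) (by linarith)
    have hid : Real.sin (α - β) * R w φ
        = Real.sin (α - φ) * R w β + Real.sin (φ - β) * R w α := by
      simp only [R, Real.sin_sub]; ring
    by_contra hc
    push_neg at hc
    nlinarith [mul_nonpos_of_nonneg_of_nonpos hs2 hB,
      mul_nonpos_of_nonneg_of_nonpos hs3 hA, mul_pos hs1 hc]

lemma prefix_sum (r : ℕ → ℝ) :
    ∀ n : ℕ, (∀ j₁ j₂, j₁ ≤ j₂ → j₂ < n → 0 ≤ r j₂ → 0 ≤ r j₁) →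
    ∃ c, c ≤ n ∧ (∑ j ∈ Finset.range n, max 0 (r j)) = (∑ j ∈ Finset.range c, r j) ∧
      (∀ j < c, 0 ≤ r j) ∧ (∀ j, c ≤ j → j < n → r j < 0) := by
  intro n
  induction n with
  | zero =>
    intro _
    exact ⟨0, le_refl 0, by simp, fun j hj => absurd hj (Nat.not_lt_zero j),
      fun j _ hj => absurd hj (Nat.not_lt_zero j)⟩
  | succ n ih =>
    intro hdown
    by_cases hn : 0 ≤ r n
    · refine ⟨n + 1, le_refl _, ?_, ?_, ?_⟩
      · refine Finset.sum_congr rfl fun j hj => ?_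
        exact max_eq_right (hdown j n (Nat.le_of_lt_succ (Finset.mem_range.1 hj))
          (Nat.lt_succ_self n) hn)
      · intro j hj
        exact hdown j n (Nat.le_of_lt_succ hj) (Nat.lt_succ_self n) hn
      · intro j h1 h2; omega
    · obtain ⟨c, hc, hsum, hpos, hneg⟩ :=
        ih (fun j₁ j₂ h1 h2 => hdown j₁ j₂ h1 (h2.trans (Nat.lt_succ_self n)))
      refine ⟨c, hc.trans (Nat.le_succ n), ?_, hpos, ?_⟩
      · rw [Finset.sum_range_succ, hsum, max_eq_left (le_of_lt (lt_of_not_ge hn)), add_zero]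
      · intro j h1 h2
        rcases Nat.lt_succ_iff_lt_or_eq.1 h2 with h | h
        · exact hneg j h1 h
        · subst h; exact lt_of_not_ge hn

lemma antitone_of_succ (θ : ℕ → ℝ) (n : ℕ) (h : ∀ i, i + 1 < n → θ (i + 1) ≤ θ i) :
    ∀ i₁ i₂, i₁ ≤ i₂ → i₂ < n → θ i₂ ≤ θ i₁ := by
  intro i₁ i₂ h12 h2n
  induction i₂ with
  | zero =>
    have : i₁ = 0 := Nat.le_zero.1 h12
    rw [this]
  | succ m ihm =>
    by_cases hi : i₁ = m + 1
    · rw [hi]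
    · have h1m : i₁ ≤ m := by omega
      have := ihm h1m (by omega)
      have := h m h2n
      linarith

lemma mono_of_succ (f : ℕ → ℝ) (n : ℕ) (h : ∀ i < n, f i ≤ f (i + 1)) :
    ∀ i₁ i₂, i₁ ≤ i₂ → i₂ ≤ n → f i₁ ≤ f i₂ := by
  intro i₁ i₂ h12 h2n
  induction i₂ with
  | zero =>
    have : i₁ = 0 := Nat.le_zero.1 h12
    rw [this]
  | succ m ihm =>
    by_cases hi : i₁ = m + 1
    · rw [hi]
    · have h1m : i₁ ≤ m := by omega
      have h1 := ihm h1m (by omega)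
      have h2 := h m (by omega)
      linarith

lemma im_mono (v : ℕ → ℂ) (n : ℕ) (h : ∀ i < n, HP (v (i + 1) - v i)) :
    ∀ i₁ i₂, i₁ ≤ i₂ → i₂ ≤ n → (v i₁).im ≤ (v i₂).im := by
  apply mono_of_succ
  intro i hi
  rcases h i hi with h' | h' <;>
  · have : 0 ≤ (v (i + 1) - v i).im := by first | exact h'.le | exact h'.1.ge
    simpa [Complex.sub_im, sub_nonneg] using this

lemma contMax (d : ℂ) : Continuous fun φ : ℝ => max 0 (R d φ) :=
  continuous_const.max ((continuous_const.mul Real.continuous_cos).sub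
    (continuous_const.mul Real.continuous_sin))

lemma edge_int {d : ℂ} (hd : HP d) :
    (∫ φ in (0:ℝ)..π, max 0 (R d φ)) = ‖d‖ - d.re := by
  have hθ1 : 0 < d.arg := hd.arg_pos
  have hθ2 : d.arg ≤ π := Complex.arg_le_pi d
  have h1 : IntervalIntegrable (fun φ => max 0 (R d φ)) MeasureTheory.volume 0 d.arg :=
    (contMax d).intervalIntegrable _ _
  have h2 : IntervalIntegrable (fun φ => max 0 (R d φ)) MeasureTheory.volume d.arg π :=
    (contMax d).intervalIntegrable _ _
  rw [← intervalIntegral.integral_add_adjacent_intervals h1 h2]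
  have e2 : (∫ φ in d.arg..π, max 0 (R d φ)) = ∫ φ in d.arg..π, (0:ℝ) := by
    apply intervalIntegral.integral_congr
    intro φ hφ
    rw [Set.uIcc_of_le hθ2] at hφ
    have hs : Real.sin (d.arg - φ) ≤ 0 :=
      Real.sin_nonpos_of_nonpos_of_neg_pi_le (by linarith [hφ.1]) (by linarith [hφ.2, hθ1])
    have hR : R d φ ≤ 0 := by
      rw [R_rot]
      exact mul_nonpos_of_nonneg_of_nonpos (norm_nonneg d) hs
    exact max_eq_left hR
  have e1 : (∫ φ in (0:ℝ)..d.arg, max 0 (R d φ))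
      = ∫ φ in (0:ℝ)..d.arg, (d.im * Real.cos φ - d.re * Real.sin φ) := by
    apply intervalIntegral.integral_congr
    intro φ hφ
    rw [Set.uIcc_of_le hθ1.le] at hφ
    have hs : 0 ≤ Real.sin (d.arg - φ) :=
      Real.sin_nonneg_of_nonneg_of_le_pi (by linarith [hφ.2]) (by linarith [hφ.1, hθ2])
    have hR : 0 ≤ R d φ := by
      rw [R_rot]
      exact mul_nonneg (norm_nonneg d) hs
    exact max_eq_right hR
  rw [e1, e2, intervalIntegral.integral_zero, add_zero]
  rw [intervalIntegral.integral_sub (f := fun φ => d.im * Real.cos φ) (g := fun φ => d.re * Real.sin φ)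
    ((continuous_const.mul Real.continuous_cos).intervalIntegrable _ _)
    ((continuous_const.mul Real.continuous_sin).intervalIntegrable _ _),
    intervalIntegral.integral_const_mul, intervalIntegral.integral_const_mul,
    integral_cos, integral_sin, Real.sin_zero, Real.cos_zero]
  have h1' := Complex.norm_mul_sin_arg d
  have h2' := Complex.norm_mul_cos_arg d
  linear_combination (-Real.sin d.arg) * h1' - Real.cos d.arg * h2'
    + ‖d‖ * (Real.sin_sq_add_cos_sq d.arg)

lemma path_integral (v : ℕ → ℂ) (n : ℕ) (hv : ∀ i < n, HP (v (i + 1) - v i)) :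
    (∫ φ in (0:ℝ)..π, ∑ i ∈ Finset.range n, max 0 (R (v (i + 1) - v i) φ))
      = (∑ i ∈ Finset.range n, ‖v (i + 1) - v i‖) - (v n).re + (v 0).re := by
  rw [intervalIntegral.integral_finset_sum
    (fun i _ => (contMax (v (i + 1) - v i)).intervalIntegrable _ _)]
  have hcong : ∀ i ∈ Finset.range n,
      (∫ φ in (0:ℝ)..π, max 0 (R (v (i + 1) - v i) φ))
        = ‖v (i + 1) - v i‖ - ((fun m => (v m).re) (i + 1) - (fun m => (v m).re) i) := by
    intro i hi
    rw [edge_int (hv i (Finset.mem_range.1 hi))]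
    simp [Complex.sub_re]
  rw [Finset.sum_congr rfl hcong, Finset.sum_sub_distrib,
    Finset.sum_range_sub (fun m => (v m).re)]
  ring

lemma special (k : ℕ) (a : ℕ → ℂ) (zA zE : ℂ) (ha0 : a 0 = 0) (hak : a k = zA)
    (hda : ∀ i < k, HP (a (i + 1) - a i))
    (hquot : zE - zA = 0 ∨ 0 < (zE - zA).im ∨ ((zE - zA).im = 0 ∧ (zE - zA).re < 0))
    (hE : zE.im = 0) :
    ∀ i ≤ k, (a i).im = 0 ∧ zE.re ≤ (a i).re := by
  have hmono := im_mono a k hda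
  have hzAim : zA.im ≤ 0 := by
    rcases hquot with h | h | h
    · have hz : zE = zA := sub_eq_zero.1 h
      rw [← hz, hE]
    · have : (zE - zA).im = zE.im - zA.im := Complex.sub_im _ _
      rw [this, hE] at h; linarith
    · have h1 := h.1
      rw [Complex.sub_im, hE] at h1; linarith
  have him : ∀ i ≤ k, (a i).im = 0 := by
    intro i hi
    have l1 : (a 0).im ≤ (a i).im := hmono 0 i (Nat.zero_le _) hi
    have l2 : (a i).im ≤ (a k).im := hmono i k hi (le_refl _)
    rw [ha0] at l1; rw [hak] at l2
    simp only [Complex.zero_im] at l1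
    linarith
  have hre : ∀ i < k, (a (i + 1)).re ≤ (a i).re := by
    intro i hi
    rcases hda i hi with h | h
    · exfalso
      have hsub := Complex.sub_im (a (i + 1)) (a i)
      rw [him (i + 1) hi, him i hi.le] at hsub
      linarith
    · have h2 := h.2
      rw [Complex.sub_re] at h2
      linarith
  have hreall : ∀ i ≤ k, (a k).re ≤ (a i).re := by
    intro i hi
    exact antitone_of_succ (fun m => (a m).re) (k + 1) (fun m hm => hre m (by omega)) i k hi
      (Nat.lt_succ_self k)
  have hzere : zE.re ≤ zA.re := by
    rcases hquot with h | h | h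
    · rw [sub_eq_zero.1 h]
    · exfalso
      have hk := him k (le_refl k)
      rw [hak] at hk
      rw [Complex.sub_im, hE, hk] at h; linarith
    · have := h.2; rw [Complex.sub_re] at this; linarith
  intro i hi
  refine ⟨him i hi, ?_⟩
  have := hreall i hi
  rw [hak] at this
  linarith

end Stmt12Aux

open Stmt12Aux


/-- Comparison of masses of nested HN polygons (Lemma 3.7 of the paper),
formalized for convex polygons in `ℂ` that are polyhedral on the left.  Let
`0 = a₀, a₁, …, a_k = Z(A)` be the vertices of the left boundary of `HN^Z(A)` and
`0 = e₀, e₁, …, e_l = Z(E)` those of `HN^Z(E)`: each consecutive difference lies in the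
semi-closed upper half plane `ℍ`, consecutive differences have strictly decreasing phases
(convexity), every vertex `a_i` lies weakly to the right of every oriented edge of the
`e`-path (this is the containment `HN^Z(A) ⊆ HN^Z(E)`), and `Z(E) − Z(A) ∈ ℍ ∪ {0}` (the
charge of the quotient `E/A`).  Writing `m^Z(A) = ∑ |a_{i+1} − a_i|` and
`m^Z(E) = ∑ |e_{j+1} − e_j|` for the masses (lengths of the left boundaries), we have
`m^Z(A) − Re Z(A) ≤ m^Z(E) − Re Z(E)`. -/
theorem stmt12 (k l : ℕ) (a e : ℕ → ℂ) (zA zE : ℂ)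
    (ha0 : a 0 = 0) (hak : a k = zA) (he0 : e 0 = 0) (hel : e l = zE)
    (hda : ∀ i < k, 0 < (a (i + 1) - a i).im ∨
      ((a (i + 1) - a i).im = 0 ∧ (a (i + 1) - a i).re < 0))
    (hde : ∀ j < l, 0 < (e (j + 1) - e j).im ∨
      ((e (j + 1) - e j).im = 0 ∧ (e (j + 1) - e j).re < 0))
    (haconv : ∀ i, i + 1 < k → (a (i + 2) - a (i + 1)).arg < (a (i + 1) - a i).arg)
    (heconv : ∀ j, j + 1 < l → (e (j + 2) - e (j + 1)).arg < (e (j + 1) - e j).arg)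
    (hsub : ∀ i ≤ k, ∀ j < l,
      (e (j + 1) - e j).re * (a i - e j).im - (e (j + 1) - e j).im * (a i - e j).re ≤ 0)
    (hquot : zE - zA = 0 ∨ 0 < (zE - zA).im ∨ ((zE - zA).im = 0 ∧ (zE - zA).re < 0)) :
    (∑ i ∈ Finset.range k, ‖a (i + 1) - a i‖) - zA.re ≤
      (∑ j ∈ Finset.range l, ‖e (j + 1) - e j‖) - zE.re := by
  have hdaHP : ∀ i < k, HP (a (i + 1) - a i) := hda
  have hdeHP : ∀ j < l, HP (e (j + 1) - e j) := hde
  have argAntiA : ∀ i₁ i₂, i₁ ≤ i₂ → i₂ < k →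
      (a (i₂ + 1) - a i₂).arg ≤ (a (i₁ + 1) - a i₁).arg :=
    antitone_of_succ (fun i => (a (i + 1) - a i).arg) k (fun i hi => (haconv i hi).le)
  have argAntiE : ∀ j₁ j₂, j₁ ≤ j₂ → j₂ < l →
      (e (j₂ + 1) - e j₂).arg ≤ (e (j₁ + 1) - e j₁).arg :=
    antitone_of_succ (fun j => (e (j + 1) - e j).arg) l (fun j hj => (heconv j hj).le)
  have haim := im_mono a k hdaHP
  have hImAE : zA.im ≤ zE.im := by
    rcases hquot with h | h | h
    · rw [sub_eq_zero.1 h]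
    · rw [Complex.sub_im] at h; linarith
    · have h1 := h.1; rw [Complex.sub_im] at h1; linarith
  -- pointwise comparison of the integrands
  have hpt : ∀ φ ∈ Set.Icc (0:ℝ) Real.pi,
      (∑ i ∈ Finset.range k, max 0 (R (a (i + 1) - a i) φ)) ≤
      (∑ j ∈ Finset.range l, max 0 (R (e (j + 1) - e j) φ)) := by
    rintro φ ⟨hφ1, hφ2⟩
    have downA : ∀ j₁ j₂, j₁ ≤ j₂ → j₂ < k →
        0 ≤ R (a (j₂ + 1) - a j₂) φ → 0 ≤ R (a (j₁ + 1) - a j₁) φ := by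
      intro j₁ j₂ h12 h2 hR
      have hH2 := hdaHP j₂ h2
      rw [R_rot] at hR
      have hs2 : 0 ≤ Real.sin ((a (j₂ + 1) - a j₂).arg - φ) := by
        by_contra hc; push_neg at hc
        nlinarith [hH2.abs_pos]
      have hφθ2 : φ ≤ (a (j₂ + 1) - a j₂).arg :=
        le_of_sin_nonneg (Complex.arg_le_pi _) hφ1 hs2 (by linarith [hH2.arg_pos])
      have hφθ1 : φ ≤ (a (j₁ + 1) - a j₁).arg := le_trans hφθ2 (argAntiA j₁ j₂ h12 h2)
      rw [R_rot]
      apply mul_nonneg (norm_nonneg _)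
      exact Real.sin_nonneg_of_nonneg_of_le_pi (by linarith)
        (by linarith [Complex.arg_le_pi (a (j₁ + 1) - a j₁)])
    have downE : ∀ j₁ j₂, j₁ ≤ j₂ → j₂ < l →
        0 ≤ R (e (j₂ + 1) - e j₂) φ → 0 ≤ R (e (j₁ + 1) - e j₁) φ := by
      intro j₁ j₂ h12 h2 hR
      have hH2 := hdeHP j₂ h2
      rw [R_rot] at hR
      have hs2 : 0 ≤ Real.sin ((e (j₂ + 1) - e j₂).arg - φ) := by
        by_contra hc; push_neg at hc
        nlinarith [hH2.abs_pos]
      have hφθ2 : φ ≤ (e (j₂ + 1) - e j₂).arg :=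
        le_of_sin_nonneg (Complex.arg_le_pi _) hφ1 hs2 (by linarith [hH2.arg_pos])
      have hφθ1 : φ ≤ (e (j₁ + 1) - e j₁).arg := le_trans hφθ2 (argAntiE j₁ j₂ h12 h2)
      rw [R_rot]
      apply mul_nonneg (norm_nonneg _)
      exact Real.sin_nonneg_of_nonneg_of_le_pi (by linarith)
        (by linarith [Complex.arg_le_pi (e (j₁ + 1) - e j₁)])
    obtain ⟨cA, hcA, hsumA, hposA, hnegA⟩ :=
      prefix_sum (fun i => R (a (i + 1) - a i) φ) k downA
    obtain ⟨cE, hcE, hsumE, hposE, hnegE⟩ :=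
      prefix_sum (fun j => R (e (j + 1) - e j) φ) l downE
    have telA : (∑ i ∈ Finset.range cA, R (a (i + 1) - a i) φ) = R (a cA) φ := by
      have h0 : ∀ i ∈ Finset.range cA, R (a (i + 1) - a i) φ
          = (fun m => R (a m) φ) (i + 1) - (fun m => R (a m) φ) i := fun i _ => R_sub _ _ _
      rw [Finset.sum_congr rfl h0, Finset.sum_range_sub (fun m => R (a m) φ), ha0]
      simp [R]
    have telE : (∑ j ∈ Finset.range cE, R (e (j + 1) - e j) φ) = R (e cE) φ := by
      have h0 : ∀ j ∈ Finset.range cE, R (e (j + 1) - e j) φ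
          = (fun m => R (e m) φ) (j + 1) - (fun m => R (e m) φ) j := fun j _ => R_sub _ _ _
      rw [Finset.sum_congr rfl h0, Finset.sum_range_sub (fun m => R (e m) φ), he0]
      simp [R]
    rw [hsumA, hsumE, telA, telE]
    -- the containment hypothesis in rotated form
    have hsubR : ∀ i' ≤ k, ∀ j < l, R (a i' - e j) ((e (j + 1) - e j).arg) ≤ 0 := by
      intro i' hi' j hj
      have hH := hdeHP j hj
      have h2 := Complex.norm_mul_cos_arg (e (j + 1) - e j)
      have h3 := Complex.norm_mul_sin_arg (e (j + 1) - e j)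
      have h4 := hsub i' hi' j hj
      have key : ‖e (j + 1) - e j‖ * R (a i' - e j) ((e (j + 1) - e j).arg)
          = (e (j + 1) - e j).re * (a i' - e j).im
            - (e (j + 1) - e j).im * (a i' - e j).re := by
        simp only [R]
        linear_combination ((a i' - e j).im) * h2 - ((a i' - e j).re) * h3
      by_contra hc
      push_neg at hc
      nlinarith [mul_pos hH.abs_pos hc]
    have hposE' : ∀ j, j < cE → φ ≤ (e (j + 1) - e j).arg := by
      intro j hj
      have hjl : j < l := lt_of_lt_of_le hj hcE
      have hH := hdeHP j hjl
      have hR := hposE j hj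
      rw [R_rot] at hR
      have hs : 0 ≤ Real.sin ((e (j + 1) - e j).arg - φ) := by
        by_contra hc; push_neg at hc
        nlinarith [hH.abs_pos]
      exact le_of_sin_nonneg (Complex.arg_le_pi _) hφ1 hs (by linarith [hH.arg_pos])
    have hnegE' : ∀ j, cE ≤ j → j < l → (e (j + 1) - e j).arg < φ := by
      intro j h1 h2
      have hH := hdeHP j h2
      have hR := hnegE j h1 h2
      rw [R_rot] at hR
      have hs : Real.sin ((e (j + 1) - e j).arg - φ) < 0 := by
        by_contra hc; push_neg at hc
        nlinarith [hH.abs_pos, mul_nonneg (norm_nonneg (e (j + 1) - e j)) hc]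
      exact lt_of_sin_neg (Complex.arg_le_pi _) hφ1 hs
    have haim0 : 0 ≤ (a cA).im := by
      have h0 := haim 0 cA (Nat.zero_le _) hcA
      rw [ha0] at h0; simpa using h0
    have haimzA : (a cA).im ≤ zA.im := by
      have h0 := haim cA k hcA (le_refl _)
      rw [hak] at h0; exact h0
    have hsφ : 0 ≤ Real.sin φ := Real.sin_nonneg_of_nonneg_of_le_pi hφ1 hφ2
    rcases Nat.eq_zero_or_pos l with hl0 | hl0
    · -- l = 0 : zE = 0
      have hcE0 : cE = 0 := Nat.le_zero.1 (hl0 ▸ hcE)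
      have hzE0 : zE = 0 := by rw [← hel, hl0, he0]
      obtain ⟨him0, hre0⟩ :=
        special k a zA zE ha0 hak hdaHP hquot (by rw [hzE0]; simp) cA hcA
      have hzEre : zE.re = 0 := by rw [hzE0]; simp
      rw [hcE0, he0]
      simp only [R, Complex.zero_im, Complex.zero_re, him0]
      nlinarith [hre0, hzEre, hsφ]
    · rcases Nat.eq_zero_or_pos cE with hc0 | hc0
      · -- cE = 0, l > 0
        have hβ := hsubR cA hcA 0 hl0
        have hα : R (a cA - e 0) Real.pi ≤ 0 := by
          rw [he0, sub_zero]
          simp only [R, Real.cos_pi, Real.sin_pi]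
          nlinarith [haim0]
        have hβφ : (e (0 + 1) - e 0).arg < φ := hnegE' 0 hc0.le hl0
        have hW : R (a cA - e 0) φ ≤ 0 :=
          interp (hdeHP 0 hl0).arg_pos.le hβφ.le hφ2 (le_refl Real.pi)
            (by linarith [(hdeHP 0 hl0).arg_pos]) hα hβ
        rw [hc0]
        rw [R_sub] at hW; linarith
      · rcases eq_or_lt_of_le hcE with hceq | hclt
        · -- cE = l > 0
          obtain ⟨l', rfl⟩ : ∃ l', l = l' + 1 := ⟨l - 1, by omega⟩
          have hφα : φ ≤ (e (l' + 1) - e l').arg := hposE' l' (by omega)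
          have htrans : R (a cA - e (l' + 1)) ((e (l' + 1) - e l').arg) ≤ 0 := by
            have h1 := hsubR cA hcA l' (by omega)
            have hdecomp : a cA - e (l' + 1)
                = (a cA - e l') - (e (l' + 1) - e l') := by ring
            rw [hdecomp, R_sub]
            linarith [R_self_arg (e (l' + 1) - e l')]
          by_cases hπ : (e (l' + 1) - e l').arg = Real.pi
          · -- degenerate: the last `e`-edge points in direction π
            have hl'0 : l' = 0 := by
              by_contra h0
              have hstep := heconv (l' - 1) (by omega)
              have e2 : l' - 1 + 1 = l' := by omega
              have e3 : l' - 1 + 2 = l' + 1 := by omega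
              rw [e2, e3] at hstep
              linarith [Complex.arg_le_pi (e l' - e (l' - 1)), hπ]
            subst hl'0
            rw [he0, sub_zero, hel] at hπ
            obtain ⟨hre, him⟩ := Complex.arg_eq_pi_iff.1 hπ
            obtain ⟨ha_im, ha_re⟩ := special k a zA zE ha0 hak hdaHP hquot him cA hcA
            rw [hceq, hel]
            simp only [R, ha_im, him]
            nlinarith [ha_re, hsφ]
          · -- generic case at the top end
            have hβ : R (a cA - e (l' + 1)) 0 ≤ 0 := by
              simp only [R, Real.cos_zero, Real.sin_zero, Complex.sub_im]
              rw [hel]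
              have h1 : (a cA).im ≤ zE.im := le_trans haimzA hImAE
              linarith
            have hW : R (a cA - e (l' + 1)) φ ≤ 0 :=
              interp le_rfl hφ1 hφα (Complex.arg_le_pi _)
                (by rw [sub_zero]; exact lt_of_le_of_ne (Complex.arg_le_pi _) hπ) htrans hβ
            rw [hceq]
            rw [R_sub] at hW; linarith
        · -- 0 < cE < l
          obtain ⟨c', rfl⟩ : ∃ c', cE = c' + 1 := ⟨cE - 1, by omega⟩
          have hφα : φ ≤ (e (c' + 1) - e c').arg := hposE' c' (by omega)
          have hβφ : (e (c' + 1 + 1) - e (c' + 1)).arg < φ := hnegE' (c' + 1) (le_refl _) hclt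
          have hα : R (a cA - e (c' + 1)) ((e (c' + 1) - e c').arg) ≤ 0 := by
            have h1 := hsubR cA hcA c' (by omega)
            have hdecomp : a cA - e (c' + 1)
                = (a cA - e c') - (e (c' + 1) - e c') := by ring
            rw [hdecomp, R_sub]
            linarith [R_self_arg (e (c' + 1) - e c')]
          have hβ := hsubR cA hcA (c' + 1) hclt
          have hW : R (a cA - e (c' + 1)) φ ≤ 0 :=
            interp (hdeHP (c' + 1) hclt).arg_pos.le hβφ.le hφα (Complex.arg_le_pi _)
              (by linarith [(hdeHP (c' + 1) hclt).arg_pos,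
                Complex.arg_le_pi (e (c' + 1) - e c')]) hα hβ
          rw [R_sub] at hW; linarith
  -- integrate the pointwise inequality
  have contA : Continuous fun φ => ∑ i ∈ Finset.range k, max 0 (R (a (i + 1) - a i) φ) :=
    continuous_finset_sum _ (fun i _ => contMax _)
  have contE : Continuous fun φ => ∑ j ∈ Finset.range l, max 0 (R (e (j + 1) - e j) φ) :=
    continuous_finset_sum _ (fun j _ => contMax _)
  have hmono := intervalIntegral.integral_mono_on (μ := MeasureTheory.volume) Real.pi_pos.le
    (contA.intervalIntegrable 0 Real.pi) (contE.intervalIntegrable 0 Real.pi) hpt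
  rw [path_integral a k hdaHP, path_integral e l hdeHP, hak, ha0, hel, he0] at hmono
  simp only [Complex.zero_re, add_zero] at hmono
  linarith
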